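/- For n = 1, 2, 3, …, let X_n be a locally compact, second countable, Hausdorff topological space, A = Π_{n=1}^∞ X_n^∞, and W_0 the quotient of A by the truncation map Q. For x ∈ W_0 write x̄ = Q^{-1}({x}) ⊂ A. Then for a sequence {x^n} in W_0 and x ∈ W_0: x^n → x in W_0 if and only if for every sequence {y^n} in A with y^n ∈ x̄^n for all n, every cluster point of {y^n} lies in x̄. -/

import Mathlib

open Filter Topology

/-- The set `W₀ = Y₀ ∪ Z`: the disjoint union of the finite products
`Y^k = X_1 × ⋯ × X_k` (with `Y^0 = {0}` a single point, the empty string) and the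
infinite product `Z = Π_{n} X_n`.  (Indices are `0`-based here: `X 0, X 1, …` play the
roles of `X_1, X_2, …`.) -/
def W0 (X : ℕ → Type) : Type := (Σ k : ℕ, ∀ i : Fin k, X i) ⊕ (∀ n, X n)

namespace W0

variable {X : ℕ → Type}

/-- A finite string, an element of `Y₀ = ∪_k Y^k ⊂ W₀`. -/
def fin (p : Σ k : ℕ, ∀ i : Fin k, X i) : W0 X := Sum.inl p

/-- An infinite string, an element of `Z = Π_n X_n ⊂ W₀`. -/
def inf (z : ∀ n, X n) : W0 X := Sum.inr z

/-- The point `0`, the empty string: the unique element of `Y^0`. -/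
def zero : W0 X := Sum.inl ⟨0, fun i => i.elim0⟩

/-- The length `ℓ(w) ∈ ℕ ∪ {∞}` of an element of `W₀`. -/
def len : W0 X → ℕ∞ := Sum.elim (fun p => (p.1 : ℕ∞)) (fun _ => ⊤)

/-- The `i`-th coordinate of an element of `W₀`, as an element of the one-point
compactification `X_i^∞`; it is taken to be `∞_i` when `i ≥ ℓ(w)`. -/
def coord (w : W0 X) (i : ℕ) : OnePoint (X i) :=
  Sum.elim
    (fun p : Σ k : ℕ, ∀ j : Fin k, X j =>
      if h : i < p.1 then ((p.2 ⟨i, h⟩ : X i) : OnePoint (X i)) else OnePoint.infty)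
    (fun z => ((z i : X i) : OnePoint (X i))) w

/-- The value of a point of `X^∞` other than `∞`. -/
noncomputable def val {Y : Type} (o : OnePoint Y) (h : o ≠ OnePoint.infty) : Y :=
  (OnePoint.ne_infty_iff_exists.mp h).choose

open Classical in
/-- The truncation map `Q : A = Π_n X_n^∞ → W₀`: `Q({x_i}) = {x_i} ∈ Z` if no
coordinate is a point at infinity; `Q({x_i}) = (x_1, …, x_n) ∈ Y^n` if `n` is smallest
with `x_{n+1} = ∞_{n+1}`; `Q({x_i}) = 0` if `x_1 = ∞_1`. -/
noncomputable def Q (x : ∀ n, OnePoint (X n)) : W0 X :=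
  if h : ∃ n, x n = OnePoint.infty then
    fin ⟨Nat.find h, fun i => val (x i) (Nat.find_min h i.isLt)⟩
  else
    inf fun n => val (x n) (fun hn => h ⟨n, hn⟩)

/-- `W₀` carries the quotient topology induced by the surjection `Q` from the product
`A = Π_n X_n^∞` of the one-point compactifications. -/
noncomputable instance [∀ n, TopologicalSpace (X n)] : TopologicalSpace (W0 X) :=
  TopologicalSpace.coinduced Q Pi.topologicalSpace

/-! ### Auxiliary lemmas -/

lemma val_coe {Y : Type} (o : OnePoint Y) (h : o ≠ OnePoint.infty) :
    ((val o h : Y) : OnePoint Y) = o :=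
  (OnePoint.ne_infty_iff_exists.mp h).choose_spec

lemma val_eq {Y : Type} {o o' : OnePoint Y} (h : o ≠ OnePoint.infty)
    (h' : o' ≠ OnePoint.infty) (he : o = o') : val o h = val o' h' := by
  subst he; rfl

lemma val_coe' {Y : Type} (y : Y) (h : (y : OnePoint Y) ≠ OnePoint.infty) :
    val (y : OnePoint Y) h = y :=
  OnePoint.coe_injective (val_coe _ h)

/-- If no coordinate before `j` is `∞`, then the `j`-th coordinate of `Q x` is `x j`. -/
lemma coordQ (x : ∀ n, OnePoint (X n)) (j : ℕ)
    (hj : ∀ k < j, x k ≠ OnePoint.infty) : coord (Q x) j = x j := by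
  classical
  by_cases hx : ∃ n, x n = OnePoint.infty
  · simp only [Q, dif_pos hx]
    simp only [fin, coord, Sum.elim_inl]
    by_cases hlt : j < Nat.find hx
    · rw [dif_pos hlt]
      exact val_coe _ _
    · rw [dif_neg hlt]
      have h1 : Nat.find hx ≤ j := not_lt.mp hlt
      have h2 : j ≤ Nat.find hx := by
        by_contra hcon
        exact hj _ (not_le.mp hcon) (Nat.find_spec hx)
      have : Nat.find hx = j := le_antisymm h1 h2
      rw [← this]
      exact (Nat.find_spec hx).symm
  · simp only [Q, dif_neg hx]
    simp only [inf, coord, Sum.elim_inr]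
    exact val_coe _ _

/-- If `Q x = Q x'`, the coordinates of `x` and `x'` agree along the initial segment of
non-`∞` coordinates of `x` (including the first `∞` coordinate, if any). -/
lemma eq_of_Q_eq {x x' : ∀ n, OnePoint (X n)} (h : Q x = Q x') :
    ∀ j, (∀ k < j, x k ≠ OnePoint.infty) → x j = x' j := by
  intro j
  induction j using Nat.strong_induction_on with
  | _ j ih =>
    intro hj
    have hx' : ∀ k < j, x' k ≠ OnePoint.infty := by
      intro k hk
      rw [← ih k hk (fun m hm => hj m (hm.trans hk))]
      exact hj k hk
    calc x j = coord (Q x) j := (coordQ x j hj).symm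
    _ = coord (Q x') j := by rw [h]
    _ = x' j := coordQ x' j hx'

lemma fin_congr {k l : ℕ} (h : k = l) (f : ∀ i : Fin k, X i) (g : ∀ i : Fin l, X i)
    (hfg : ∀ (i : ℕ) (hik : i < k), f ⟨i, hik⟩ = g ⟨i, h ▸ hik⟩) :
    fin ⟨k, f⟩ = (fin ⟨l, g⟩ : W0 X) := by
  subst h
  have : f = g := funext fun i => hfg i.1 i.2
  rw [this]

/-- If the coordinates of `a` and `b` agree along the alive prefix of `a`, then
`Q a = Q b`. -/
lemma Q_eq_of {a b : ∀ n, OnePoint (X n)}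
    (hab : ∀ j, (∀ k < j, a k ≠ OnePoint.infty) → a j = b j) : Q a = Q b := by
  classical
  by_cases ha : ∃ n, a n = OnePoint.infty
  · have hpre : ∀ k < Nat.find ha, a k = b k := fun k hk =>
      hab k (fun m hm => Nat.find_min ha (hm.trans hk))
    have hbN : b (Nat.find ha) = OnePoint.infty := by
      rw [← hab (Nat.find ha) (fun m hm => Nat.find_min ha hm)]
      exact Nat.find_spec ha
    have hb : ∃ n, b n = OnePoint.infty := ⟨_, hbN⟩
    have hN : Nat.find ha = Nat.find hb := by
      refine le_antisymm ?_ (Nat.find_le hbN)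
      refine (Nat.le_find_iff hb _).mpr fun m hm => ?_
      rw [← hpre m hm]
      exact Nat.find_min ha hm
    simp only [Q, dif_pos ha, dif_pos hb]
    exact fin_congr hN _ _ (fun i hik => val_eq _ _ (hpre i hik))
  · have hab' : ∀ n, a n = b n := fun n =>
      hab n (fun k _ hk => ha ⟨k, hk⟩)
    have hb : ¬∃ n, b n = OnePoint.infty := by
      rintro ⟨n, hn⟩
      exact ha ⟨n, (hab' n).trans hn⟩
    simp only [Q, dif_neg ha, dif_neg hb]
    simp only [inf]
    have : (fun n => val (a n) (fun hn => ha ⟨n, hn⟩)) =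
        (fun n => val (b n) (fun hn => hb ⟨n, hn⟩)) :=
      funext fun n => val_eq _ _ (hab' n)
    rw [this]

/-- If `Q a ≠ Q b`, there is a first coordinate where `a` and `b` differ, and all
earlier coordinates are equal and distinct from `∞`. -/
lemma sep {a b : ∀ n, OnePoint (X n)} (h : Q a ≠ Q b) :
    ∃ i, a i ≠ b i ∧ ∀ j < i, a j = b j ∧ a j ≠ OnePoint.infty := by
  classical
  have hne : ∃ i, a i ≠ b i := by
    by_contra hc
    push_neg at hc
    exact h (by rw [funext hc])
  refine ⟨Nat.find hne, Nat.find_spec hne, fun j hj => ?_⟩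
  have hj1 : a j = b j := not_not.mp (Nat.find_min hne hj)
  refine ⟨hj1, fun hinf => ?_⟩
  apply h
  apply Q_eq_of
  intro m hm
  have hmj : m ≤ j := by
    by_contra hc
    exact hm j (not_le.mp hc) hinf
  exact not_not.mp (Nat.find_min hne (lt_of_le_of_lt hmj hj))

/-- `coord` gives a section of `Q`. -/
lemma Q_coord (w : W0 X) : Q (fun i => coord w i) = w := by
  classical
  cases w with
  | inl p =>
    obtain ⟨k, f⟩ := p
    have hk : coord (Sum.inl ⟨k, f⟩ : W0 X) k = OnePoint.infty := by
      simp [coord]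
    have hex : ∃ n, coord (Sum.inl ⟨k, f⟩ : W0 X) n = OnePoint.infty := ⟨k, hk⟩
    have hlt : ∀ m < k, coord (Sum.inl ⟨k, f⟩ : W0 X) m ≠ OnePoint.infty := by
      intro m hm
      simp only [coord, Sum.elim_inl, dif_pos hm]
      exact OnePoint.coe_ne_infty _
    have hfind : Nat.find hex = k := by
      refine le_antisymm (Nat.find_le hk) ?_
      refine (Nat.le_find_iff hex _).mpr fun m hm => hlt m hm
    simp only [Q, dif_pos hex]
    refine fin_congr hfind _ _ (fun i hik => ?_)
    have hik' : i < k := hfind ▸ hik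
    have hco : coord (Sum.inl ⟨k, f⟩ : W0 X) i = ((f ⟨i, hik'⟩ : X i) : OnePoint (X i)) := by
      simp only [coord, Sum.elim_inl, dif_pos hik']
    refine OnePoint.coe_injective ?_
    rw [val_coe]
    exact hco
  | inr z =>
    have hnex : ¬∃ n, coord (Sum.inr z : W0 X) n = OnePoint.infty := by
      rintro ⟨n, hn⟩
      simp only [coord, Sum.elim_inr] at hn
      exact OnePoint.coe_ne_infty _ hn
    simp only [Q, dif_neg hnex]
    simp only [inf]
    congr 1
    funext n
    exact val_coe' _ _

section Topology

variable [∀ n, TopologicalSpace (X n)]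

lemma continuous_Q : Continuous (Q : (∀ n, OnePoint (X n)) → W0 X) :=
  continuous_coinduced_rng

lemma isOpen_W0 {s : Set (W0 X)} (h : IsOpen (Q ⁻¹' s)) : IsOpen s :=
  isOpen_coinduced.mpr h

variable [∀ n, LocallyCompactSpace (X n)] [∀ n, T2Space (X n)]

lemma t2 : T2Space (W0 X) := by
  constructor
  intro w w' hww
  obtain ⟨a, rfl⟩ : ∃ a, Q a = w := ⟨fun i => coord w i, Q_coord w⟩
  obtain ⟨b, rfl⟩ : ∃ b, Q b = w' := ⟨fun i => coord w' i, Q_coord w'⟩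
  obtain ⟨i, hi, hpre⟩ := sep hww
  obtain ⟨U, V, hU, hV, haU, hbV, hUV⟩ := t2_separation hi
  -- the saturated open boxes
  set SU : Set (∀ n, OnePoint (X n)) :=
    {x | (∀ j < i, x j ≠ OnePoint.infty) ∧ x i ∈ U} with hSU
  set SV : Set (∀ n, OnePoint (X n)) :=
    {x | (∀ j < i, x j ≠ OnePoint.infty) ∧ x i ∈ V} with hSV
  have key : ∀ x x' : ∀ n, OnePoint (X n), Q x = Q x' →
      (∀ j < i, x j ≠ OnePoint.infty) →
      (∀ j < i, x' j ≠ OnePoint.infty) ∧ x' i = x i := by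
    intro x x' hq hx
    have hcoords : ∀ j ≤ i, x j = x' j := fun j hj =>
      eq_of_Q_eq hq j (fun k hk => hx k (lt_of_lt_of_le hk hj))
    exact ⟨fun j hj => (hcoords j hj.le) ▸ hx j hj, (hcoords i le_rfl).symm⟩
  have hopen : ∀ (W : Set (OnePoint (X i))), IsOpen W →
      IsOpen {x : ∀ n, OnePoint (X n) | (∀ j < i, x j ≠ OnePoint.infty) ∧ x i ∈ W} := by
    intro W hW
    have h1 : IsOpen {x : ∀ n, OnePoint (X n) | ∀ j < i, x j ≠ OnePoint.infty} := by
      have : {x : ∀ n, OnePoint (X n) | ∀ j < i, x j ≠ OnePoint.infty} =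
          ⋂ j ∈ Finset.range i, (fun x : ∀ n, OnePoint (X n) => x j) ⁻¹'
            ({OnePoint.infty}ᶜ) := by
        ext x
        simp [Set.mem_iInter]
      rw [this]
      exact isOpen_biInter_finset fun j _ =>
        (OnePoint.isClosed_infty.isOpen_compl).preimage (continuous_apply j)
    exact h1.inter (hW.preimage (continuous_apply i))
  have sat : ∀ (W : Set (OnePoint (X i))),
      Q ⁻¹' (Q '' {x : ∀ n, OnePoint (X n) | (∀ j < i, x j ≠ OnePoint.infty) ∧ x i ∈ W}) =
        {x : ∀ n, OnePoint (X n) | (∀ j < i, x j ≠ OnePoint.infty) ∧ x i ∈ W} := by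
    intro W
    ext x
    constructor
    · rintro ⟨x1, hx1, hq⟩
      obtain ⟨h1, h2⟩ := key x1 x hq hx1.1
      exact ⟨h1, h2 ▸ hx1.2⟩
    · intro hx
      exact ⟨x, hx, rfl⟩
  refine ⟨Q '' SU, Q '' SV, isOpen_W0 (by rw [sat]; exact hopen U hU),
    isOpen_W0 (by rw [sat]; exact hopen V hV),
    ⟨a, ⟨fun j hj => (hpre j hj).2, haU⟩, rfl⟩,
    ⟨b, ⟨fun j hj => (hpre j hj).1 ▸ (hpre j hj).2, hbV⟩, rfl⟩, ?_⟩
  rw [Set.disjoint_left]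
  rintro c ⟨x1, hx1, hc1⟩ ⟨x2, hx2, hc2⟩
  obtain ⟨-, h2⟩ := key x1 x2 (hc1.trans hc2.symm) hx1.1
  exact Set.disjoint_left.mp hUV (h2 ▸ hx1.2) hx2.2

end Topology

end W0

/-- The one-point compactification of a locally compact, second countable Hausdorff
space is first countable. -/
lemma onePoint_firstCountable (Y : Type) [TopologicalSpace Y] [LocallyCompactSpace Y]
    [SecondCountableTopology Y] [T2Space Y] :
    FirstCountableTopology (OnePoint Y) := by
  constructor
  intro x
  induction x using OnePoint.rec with
  | infty =>
    rw [OnePoint.nhds_infty_eq]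
    have : (Filter.coclosedCompact Y).IsCountablyGenerated := by
      rw [Filter.coclosedCompact_eq_cocompact]
      set K := CompactExhaustion.choice Y
      have hb : (Filter.cocompact Y).HasBasis (fun _ : ℕ => True) fun n => (K n)ᶜ :=
        Filter.hasBasis_cocompact.to_hasBasis
          (fun s hs =>
            let ⟨n, hn⟩ := K.exists_superset_of_isCompact hs
            ⟨n, trivial, Set.compl_subset_compl.mpr hn⟩)
          (fun n _ => ⟨K n, K.isCompact n, subset_rfl⟩)
      exact hb.isCountablyGenerated
    have hpure : Filter.IsCountablyGenerated
        (pure (OnePoint.infty : OnePoint Y) : Filter (OnePoint Y)) :=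
      Filter.isCountablyGenerated_pure _
    infer_instance
  | coe y =>
    rw [OnePoint.nhds_coe_eq]
    infer_instance

/-- Proposition 3.4: for a sequence `{x^n}` in `W₀` and `x ∈ W₀`, `x^n → x` in `W₀` iff
for every sequence `{y^n}` in `A` with `y^n ∈ Q⁻¹({x^n})`, every cluster point of
`{y^n}` (i.e. every limit of a subsequence) lies in `Q⁻¹({x})`. -/
theorem stmt9 (X : ℕ → Type) [∀ n, TopologicalSpace (X n)]
    [∀ n, LocallyCompactSpace (X n)] [∀ n, SecondCountableTopology (X n)]
    [∀ n, T2Space (X n)] (xseq : ℕ → W0 X) (x : W0 X) :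
    Filter.Tendsto xseq Filter.atTop (nhds x) ↔
      ∀ yseq : ℕ → (∀ n, OnePoint (X n)), (∀ n, W0.Q (yseq n) = xseq n) →
        ∀ y : ∀ n, OnePoint (X n),
          (∃ φ : ℕ → ℕ, StrictMono φ ∧
            Filter.Tendsto (yseq ∘ φ) Filter.atTop (nhds y)) →
          W0.Q y = x := by
  haveI : T2Space (W0 X) := W0.t2
  haveI : ∀ n, FirstCountableTopology (OnePoint (X n)) := fun n =>
    onePoint_firstCountable (X n)
  constructor
  · rintro h yseq hy y ⟨φ, hφ, hconv⟩
    have h1 : Tendsto (xseq ∘ φ) atTop (𝓝 x) := h.comp hφ.tendsto_atTop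
    have h2 : Tendsto (W0.Q ∘ (yseq ∘ φ)) atTop (𝓝 (W0.Q y)) :=
      (W0.continuous_Q.tendsto y).comp hconv
    have he : W0.Q ∘ (yseq ∘ φ) = xseq ∘ φ := funext fun n => hy (φ n)
    rw [he] at h2
    exact tendsto_nhds_unique h2 h1
  · intro H
    by_contra hc
    rw [tendsto_nhds] at hc
    push_neg at hc
    obtain ⟨U, hUopen, hxU, hnot⟩ := hc
    have hfreq : ∃ᶠ n in atTop, xseq n ∉ U :=
      Filter.not_eventually.mp hnot
    obtain ⟨φ, hφ, hout⟩ := Filter.extraction_of_frequently_atTop hfreq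
    set yseq : ℕ → ∀ n, OnePoint (X n) := fun n => fun i => W0.coord (xseq n) i with hyseq
    have hy : ∀ n, W0.Q (yseq n) = xseq n := fun n => W0.Q_coord (xseq n)
    obtain ⟨y, ψ, hψ, hconv⟩ := CompactSpace.tendsto_subseq (yseq ∘ φ)
    have hQy : W0.Q y = x := by
      refine H yseq hy y ⟨φ ∘ ψ, hφ.comp hψ, ?_⟩
      exact hconv
    have hclosed : IsClosed ((W0.Q ⁻¹' U : Set (∀ n, OnePoint (X n)))ᶜ) :=
      (hUopen.preimage W0.continuous_Q).isClosed_compl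
    have hmem : ∀ k, ((yseq ∘ φ) ∘ ψ) k ∈ (W0.Q ⁻¹' U)ᶜ := by
      intro k
      simp only [Function.comp_apply, Set.mem_compl_iff, Set.mem_preimage]
      rw [hy]
      exact hout (ψ k)
    have hy' : y ∈ (W0.Q ⁻¹' U)ᶜ :=
      hclosed.mem_of_tendsto hconv (Filter.Eventually.of_forall hmem)
    exact hy' (by rw [Set.mem_preimage, hQy]; exact hxU)
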